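/- Baumkuchen Theorem: Let D and D̃ be concentric closed disks centered at O with radii R > r > 0, and let B = D \ int(D̃) be the resulting annulus. Let P be a point of D̃ and n ≥ 4 an even integer. Draw n lines through P at equal angles π/n, cutting the annulus B into 2n pieces: for 1 ≤ j ≤ 2n, Piece(j) is the intersection of B with the j-th closed angular sector of aperture π/n at P, sectors numbered consecutively clockwise. Then for every 1 ≤ k ≤ n, the sum of the areas of Piece(k) and Piece(k+n) equals (1/n)·π(R² − r²), i.e. 1/n times the area of B. -/

import Mathlib

open Real MeasureTheory Set Complex

/-- The closed angular sector at `P` of directions with angles in `[a, b]`. -/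
def angularSector (P : ℂ) (a b : ℝ) : Set ℂ :=
  {z : ℂ | ∃ t : ℝ, 0 ≤ t ∧ ∃ φ : ℝ, a ≤ φ ∧ φ ≤ b ∧
    z = P + (t : ℂ) * Complex.exp ((φ : ℝ) * Complex.I)}

noncomputable def uFun (c : ℂ) (φ : ℝ) : ℝ := c.re * Real.cos φ + c.im * Real.sin φ

noncomputable def dFun (c : ℂ) (ρ φ : ℝ) : ℝ :=
  uFun c φ + Real.sqrt (ρ ^ 2 - ‖c‖ ^ 2 + uFun c φ ^ 2)


lemma uFun_neg (c : ℂ) (φ : ℝ) : uFun (-c) φ = -uFun c φ := by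
  simp [uFun]; ring

lemma uFun_abs_le {c : ℂ} {ρ : ℝ} (hc : ‖c‖ ≤ ρ) (φ : ℝ) :
    |uFun c φ| ≤ Real.sqrt (ρ ^ 2 - ‖c‖ ^ 2 + uFun c φ ^ 2) := by
  have h1 : 0 ≤ ρ ^ 2 - ‖c‖ ^ 2 := by
    have := norm_nonneg c; nlinarith
  rw [← Real.sqrt_sq_eq_abs]
  exact Real.sqrt_le_sqrt (by linarith)

lemma dFun_nonneg {c : ℂ} {ρ : ℝ} (hc : ‖c‖ ≤ ρ) (φ : ℝ) : 0 ≤ dFun c ρ φ := by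
  have := uFun_abs_le hc φ
  have := neg_abs_le (uFun c φ)
  unfold dFun; linarith

lemma continuous_dFun (c : ℂ) (ρ : ℝ) : Continuous (dFun c ρ) := by
  unfold dFun uFun
  continuity

lemma mem_closedBall_iff_dFun {c : ℂ} {ρ : ℝ} (hc : ‖c‖ ≤ ρ) {t φ : ℝ} (ht : 0 < t) :
    (t : ℂ) * Complex.exp ((φ : ℝ) * Complex.I) ∈ Metric.closedBall c ρ ↔ t ≤ dFun c ρ φ := by
  have hρ : 0 ≤ ρ := le_trans (norm_nonneg c) hc
  have h1 : 0 ≤ ρ ^ 2 - ‖c‖ ^ 2 := by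
    have := norm_nonneg c; nlinarith
  set u := uFun c φ with hu
  set s := Real.sqrt (ρ ^ 2 - ‖c‖ ^ 2 + u ^ 2) with hs
  have hs2 : s ^ 2 = ρ ^ 2 - ‖c‖ ^ 2 + u ^ 2 := Real.sq_sqrt (by nlinarith)
  have hsu : |u| ≤ s := uFun_abs_le hc φ
  have hs0 : 0 ≤ s := Real.sqrt_nonneg _
  have habs : ‖c‖ ^ 2 = c.re ^ 2 + c.im ^ 2 := by
    rw [Complex.sq_norm, Complex.normSq_apply]; ring
  have hmem : (t : ℂ) * Complex.exp ((φ : ℝ) * Complex.I) ∈ Metric.closedBall c ρ ↔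
      (t * Real.cos φ - c.re) ^ 2 + (t * Real.sin φ - c.im) ^ 2 ≤ ρ ^ 2 := by
    rw [Metric.mem_closedBall, Complex.dist_eq,
      ← pow_le_pow_iff_left₀ (norm_nonneg _) hρ (two_ne_zero), Complex.sq_norm]
    rw [show ((t:ℂ) * Complex.exp ((φ : ℝ) * Complex.I) - c) =
      Complex.mk (t * Real.cos φ - c.re) (t * Real.sin φ - c.im) by
        rw [Complex.exp_mul_I]
        apply Complex.ext <;>
          simp [Complex.cos_ofReal_re, Complex.sin_ofReal_re] <;> ring]
    rw [Complex.normSq_mk]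
    constructor <;> intro h <;> nlinarith [h]
  rw [hmem]
  have key : (t * Real.cos φ - c.re) ^ 2 + (t * Real.sin φ - c.im) ^ 2
      = t ^ 2 - 2 * t * u + ‖c‖ ^ 2 := by
    rw [habs, hu]; unfold uFun
    have hcs : Real.cos φ ^ 2 + Real.sin φ ^ 2 = 1 := by
      rw [add_comm]; exact Real.sin_sq_add_cos_sq φ
    nlinarith [hcs]
  rw [key]
  unfold dFun
  rw [← hu, ← hs]
  constructor
  · intro h
    by_contra hlt
    push_neg at hlt
    have f1 : 0 < t - u - s := by linarith
    have f2 : 0 < t - u + s := by linarith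
    nlinarith [mul_pos f1 f2]
  · intro h
    have h3 : u - s ≤ 0 := by
      have := le_abs_self u; linarith
    nlinarith

lemma volume_slitPlane_compl : volume (Complex.slitPlaneᶜ) = 0 := by
  have hsub : Complex.slitPlaneᶜ ⊆ (LinearMap.ker Complex.imLm : Submodule ℝ ℂ) := by
    intro z hz
    simp only [Set.mem_compl_iff, Complex.mem_slitPlane_iff, not_or, not_lt, not_ne_iff] at hz
    simpa [LinearMap.mem_ker, Complex.imLm] using hz.2
  refine measure_mono_null hsub (Measure.addHaar_submodule _ _ ?_)
  intro h
  have h2 : Complex.I ∈ LinearMap.ker Complex.imLm := h ▸ Submodule.mem_top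
  simp [LinearMap.mem_ker, Complex.imLm] at h2

lemma volume_ball_inter_sector (c : ℂ) (ρ a b : ℝ) (hc : ‖c‖ ≤ ρ)
    (ha : -π < a) (hab : a ≤ b) (hb : b < π) :
    volume (Metric.closedBall c ρ ∩ angularSector 0 a b)
      = ENNReal.ofReal (∫ φ in a..b, dFun c ρ φ ^ 2 / 2) := by
  set T : Set (ℝ × ℝ) := {p | p.2 ∈ Icc a b ∧ p.1 ∈ Ioc 0 (dFun c ρ p.2)} with hT
  have hTm : MeasurableSet T := by
    have h1 : MeasurableSet {p : ℝ × ℝ | p.2 ∈ Icc a b} :=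
      measurable_snd measurableSet_Icc
    have h2 : MeasurableSet {p : ℝ × ℝ | 0 < p.1} :=
      measurable_fst measurableSet_Ioi
    have h3 : MeasurableSet {p : ℝ × ℝ | p.1 ≤ dFun c ρ p.2} :=
      measurableSet_le measurable_fst ((continuous_dFun c ρ).measurable.comp measurable_snd)
    have : T = {p : ℝ × ℝ | p.2 ∈ Icc a b} ∩ ({p : ℝ × ℝ | 0 < p.1} ∩ {p | p.1 ≤ dFun c ρ p.2}) := by
      ext ⟨t, φ⟩; simp [hT, Set.mem_Icc, Set.mem_Ioc, and_assoc]
    rw [this]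
    exact h1.inter (h2.inter h3)
  have hTsub : T ⊆ polarCoord.target := by
    rintro ⟨t, φ⟩ ⟨hφ, ht⟩
    exact ⟨ht.1, lt_of_lt_of_le ha hφ.1, lt_of_le_of_lt hφ.2 hb⟩
  -- the set equals the polar image, up to the slit plane
  have himage : Metric.closedBall c ρ ∩ angularSector 0 a b ∩ Complex.slitPlane
      = Complex.polarCoord.symm '' T := by
    ext z
    constructor
    · rintro ⟨⟨hball, t, ht0, φ', hφa, hφb, hz⟩, hslit⟩
      rw [zero_add] at hz
      have hzne : z ≠ 0 := by
        intro h; rw [h] at hslit; exact Complex.zero_notMem_slitPlane hslit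
      have htpos : 0 < t := by
        rcases lt_or_eq_of_le ht0 with h | h
        · exact h
        · exfalso; apply hzne; rw [hz, ← h]; simp
      refine ⟨(t, φ'), ⟨⟨hφa, hφb⟩, htpos, ?_⟩, ?_⟩
      · subst hz; exact (mem_closedBall_iff_dFun hc htpos).1 hball
      · rw [Complex.polarCoord_symm_apply, hz, Complex.exp_mul_I]
        push_cast
        ring
    · rintro ⟨⟨t, φ⟩, ⟨hφab, ht⟩, rfl⟩
      have hform : Complex.polarCoord.symm (t, φ)
          = (t : ℂ) * Complex.exp ((φ : ℝ) * Complex.I) := by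
        rw [Complex.polarCoord_symm_apply, Complex.exp_mul_I]
        push_cast
        ring
      refine ⟨⟨?_, ?_⟩, ?_⟩
      · rw [hform]; exact (mem_closedBall_iff_dFun hc ht.1).2 ht.2
      · exact ⟨t, le_of_lt ht.1, φ, hφab.1, hφab.2, by rw [hform, zero_add]⟩
      · have : (t, φ) ∈ Complex.polarCoord.target := by
          exact ⟨ht.1, lt_of_lt_of_le ha hφab.1, lt_of_le_of_lt hφab.2 hb⟩
        exact Complex.polarCoord.map_target this
  have hstep1 : volume (Metric.closedBall c ρ ∩ angularSector 0 a b)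
      = volume (Complex.polarCoord.symm '' T) := by
    rw [← himage]
    exact (measure_inter_conull volume_slitPlane_compl).symm
  -- transfer to ℝ × ℝ
  have hcomp : Complex.polarCoord.symm '' T
      = Complex.measurableEquivRealProd ⁻¹' (polarCoord.symm '' T) := by
    ext z
    constructor
    · rintro ⟨p, hp, rfl⟩
      refine ⟨p, hp, ?_⟩
      rw [Complex.polarCoord_symm_apply, polarCoord_symm_apply,
        Complex.measurableEquivRealProd_apply]
      apply Prod.ext <;> simp [Complex.cos_ofReal_re, Complex.sin_ofReal_re]
    · rintro ⟨p, hp, hz⟩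
      refine ⟨p, hp, ?_⟩
      have h1 := congrArg Prod.fst hz
      have h2 := congrArg Prod.snd hz
      rw [polarCoord_symm_apply] at h1 h2
      rw [Complex.measurableEquivRealProd_apply] at h1 h2
      simp only at h1 h2
      rw [Complex.polarCoord_symm_apply]
      apply Complex.ext <;> simp [← h1, ← h2, Complex.cos_ofReal_re, Complex.sin_ofReal_re]
  have hstep2 : volume (Complex.polarCoord.symm '' T) = volume (polarCoord.symm '' T) := by
    rw [hcomp]
    exact Complex.volume_preserving_equiv_real_prod.measure_preimage_equiv _
  -- Jacobian change of variables
  have hinj : Set.InjOn polarCoord.symm T := by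
    have := polarCoord.symm.injOn
    rw [OpenPartialHomeomorph.symm_source] at this
    exact this.mono hTsub
  have hderiv : ∀ p ∈ T, HasFDerivWithinAt polarCoord.symm
      (LinearMap.toContinuousLinearMap (Matrix.toLin (Module.Basis.finTwoProd ℝ) (Module.Basis.finTwoProd ℝ)
        !![Real.cos p.2, -p.1 * Real.sin p.2; Real.sin p.2, p.1 * Real.cos p.2])) T p :=
    fun p _ => (hasFDerivAt_polarCoord_symm p).hasFDerivWithinAt
  have hjac := lintegral_image_eq_lintegral_abs_det_fderiv_mul volume hTm hderiv hinj
    (fun _ => (1 : ENNReal))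
  rw [setLIntegral_one] at hjac
  have hdet : ∫⁻ p in T, ENNReal.ofReal
        |(LinearMap.toContinuousLinearMap (Matrix.toLin (Module.Basis.finTwoProd ℝ) (Module.Basis.finTwoProd ℝ)
          !![Real.cos p.2, -p.1 * Real.sin p.2; Real.sin p.2, p.1 * Real.cos p.2])).det| * 1
      = ∫⁻ p in T, ENNReal.ofReal p.1 := by
    apply setLIntegral_congr_fun hTm
    intro p hp
    have hdetp : (LinearMap.toContinuousLinearMap (Matrix.toLin (Module.Basis.finTwoProd ℝ)
        (Module.Basis.finTwoProd ℝ)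
        !![Real.cos p.2, -p.1 * Real.sin p.2; Real.sin p.2, p.1 * Real.cos p.2])).det = p.1 := by
      conv_rhs => rw [← one_mul p.1, ← Real.cos_sq_add_sin_sq p.2]
      simp only [neg_mul, LinearMap.det_toContinuousLinearMap, LinearMap.det_toLin,
        Matrix.det_fin_two_of, sub_neg_eq_add]
      ring
    dsimp only
    rw [hdetp, abs_of_pos hp.2.1, mul_one]
  rw [hdet] at hjac
  -- Tonelli
  have hT_int : ∫⁻ p in T, ENNReal.ofReal p.1
      = ∫⁻ φ in Icc a b, ENNReal.ofReal (dFun c ρ φ ^ 2 / 2) := by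
    rw [← lintegral_indicator hTm, Measure.volume_eq_prod, lintegral_prod_symm _
      ((measurable_fst.ennreal_ofReal.indicator hTm).aemeasurable)]
    have key : ∀ φ : ℝ, (∫⁻ t, T.indicator (fun p => ENNReal.ofReal p.1) (t, φ))
        = (Icc a b).indicator (fun ψ => ENNReal.ofReal (dFun c ρ ψ ^ 2 / 2)) φ := by
      intro φ
      by_cases hφ : φ ∈ Icc a b
      · have heq : (fun t => T.indicator (fun p => ENNReal.ofReal p.1) (t, φ))
            = (Ioc (0:ℝ) (dFun c ρ φ)).indicator (fun t => ENNReal.ofReal t) := by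
          funext t
          by_cases ht : t ∈ Ioc (0:ℝ) (dFun c ρ φ)
          · rw [Set.indicator_of_mem ht, Set.indicator_of_mem (show (t,φ) ∈ T from ⟨hφ, ht⟩)]
          · rw [Set.indicator_of_notMem ht, Set.indicator_of_notMem (fun h => ht h.2)]
        rw [heq, Set.indicator_of_mem hφ, lintegral_indicator measurableSet_Ioc]
        rw [← ofReal_integral_eq_lintegral_ofReal]
        · congr 1
          rw [← intervalIntegral.integral_of_le (dFun_nonneg hc φ)]
          rw [integral_id]
          ring
        · exact (intervalIntegral.intervalIntegrable_id (μ := volume) (a := 0) (b := dFun c ρ φ)).1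
        · exact (ae_restrict_iff' measurableSet_Ioc).2 (ae_of_all _ fun t ht => ht.1.le)
      · have heq : (fun t => T.indicator (fun p => ENNReal.ofReal p.1) (t, φ))
            = fun _ => (0 : ENNReal) := by
          funext t
          exact Set.indicator_of_notMem (fun h => hφ h.1) _
        rw [heq, lintegral_zero, Set.indicator_of_notMem hφ]
    simp_rw [key]
    rw [lintegral_indicator measurableSet_Icc]
  rw [hstep1, hstep2, hjac, hT_int, ← ofReal_integral_eq_lintegral_ofReal]
  · congr 1
    rw [MeasureTheory.integral_Icc_eq_integral_Ioc, ← intervalIntegral.integral_of_le hab]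
  · exact (((continuous_dFun c ρ).pow 2).div_const 2).integrableOn_Icc
  · exact ae_of_all _ fun φ => by positivity

lemma volume_ball_inter_sector_move (O P : ℂ) (ρ α β : ℝ) :
    volume (Metric.closedBall O ρ ∩ angularSector P α β)
      = volume (Metric.closedBall (Complex.exp ((-((α + β) / 2) : ℝ) * Complex.I) * (O - P)) ρ ∩
          angularSector 0 (-((β - α) / 2)) ((β - α) / 2)) := by
  set γ : ℝ := (α + β) / 2 with hγ
  set u : Circle := Circle.exp (-γ) with huc
  have hu : (u : ℂ) = Complex.exp ((-γ : ℝ) * Complex.I) := by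
    rw [huc, Circle.coe_exp]
  set f : ℂ → ℂ := fun z => rotation u (z + (-P)) with hf
  have hmp : MeasurePreserving f volume volume :=
    (rotation u).measurePreserving.comp (measurePreserving_add_right volume (-P))
  have hemb : MeasurableEmbedding f :=
    ((rotation u).toHomeomorph.measurableEmbedding).comp
      (Homeomorph.addRight (-P)).measurableEmbedding
  have hfz : ∀ z : ℂ, f z = (u : ℂ) * (z - P) := by
    intro z; rw [hf]; simp [rotation_apply, sub_eq_add_neg]
  have hpre : f ⁻¹' (Metric.closedBall ((u : ℂ) * (O - P)) ρ ∩
        angularSector 0 (-((β - α) / 2)) ((β - α) / 2))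
      = Metric.closedBall O ρ ∩ angularSector P α β := by
    ext z
    simp only [Set.mem_preimage, Set.mem_inter_iff]
    constructor
    · rintro ⟨hball, t, ht, ψ, hψ1, hψ2, hz⟩
      rw [hfz] at hball hz
      constructor
      · rw [Metric.mem_closedBall, Complex.dist_eq] at hball ⊢
        rwa [show (u:ℂ) * (z - P) - (u:ℂ) * (O - P) = (u:ℂ) * (z - O) by ring,
          norm_mul, Circle.norm_coe, one_mul] at hball
      · refine ⟨t, ht, ψ + γ, by linarith, by linarith, ?_⟩
        have hune : (u : ℂ) ≠ 0 := Circle.coe_ne_zero u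
        have hz2 : (u : ℂ) * (z - P) = (t : ℂ) * Complex.exp ((ψ : ℝ) * Complex.I) := by
          rw [hz]; ring
        have hinv : ((u : ℂ))⁻¹ = Complex.exp ((γ : ℝ) * Complex.I) := by
          rw [hu, ← Complex.exp_neg]
          congr 1
          push_cast; ring
        have hz3 : z = P + ((u : ℂ))⁻¹ * ((t : ℂ) * Complex.exp ((ψ : ℝ) * Complex.I)) := by
          rw [← hz2, inv_mul_cancel_left₀ hune]; ring
        rw [hz3]
        congr 1
        rw [hinv, ← mul_assoc, mul_comm (Complex.exp _) (t : ℂ), mul_assoc, ← Complex.exp_add]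
        congr 1
        push_cast; ring
    · rintro ⟨hball, t, ht, φ, hφ1, hφ2, hz⟩
      rw [hfz]
      constructor
      · rw [Metric.mem_closedBall, Complex.dist_eq] at hball ⊢
        rwa [show (u:ℂ) * (z - P) - (u:ℂ) * (O - P) = (u:ℂ) * (z - O) by ring,
          norm_mul, Circle.norm_coe, one_mul]
      · refine ⟨t, ht, φ - γ, by linarith, by linarith, ?_⟩
        rw [hz, hu, zero_add]
        rw [show P + (t:ℂ) * Complex.exp ((φ:ℝ) * Complex.I) - P
          = (t:ℂ) * Complex.exp ((φ:ℝ) * Complex.I) by ring]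
        rw [← mul_assoc, mul_comm (Complex.exp _) (t:ℂ), mul_assoc, ← Complex.exp_add]
        congr 1
        push_cast; ring
  rw [← hu, ← hpre, hmp.measure_preimage_emb hemb]

lemma dFun_sq_pair (c : ℂ) {ρ : ℝ} (hc : ‖c‖ ≤ ρ) (φ : ℝ) :
    dFun c ρ φ ^ 2 / 2 + dFun (-c) ρ φ ^ 2 / 2
      = ρ ^ 2 - ‖c‖ ^ 2 + 2 * uFun c φ ^ 2 := by
  have h1 : 0 ≤ ρ ^ 2 - ‖c‖ ^ 2 := by
    have := norm_nonneg c; nlinarith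
  have hs2 : Real.sqrt (ρ ^ 2 - ‖c‖ ^ 2 + uFun c φ ^ 2) ^ 2
      = ρ ^ 2 - ‖c‖ ^ 2 + uFun c φ ^ 2 := Real.sq_sqrt (by positivity)
  unfold dFun
  rw [uFun_neg, norm_neg, neg_sq]
  linear_combination hs2

lemma volume_ball_div_sphere (O : ℂ) (r R : ℝ) (hrR : r ≤ R) (S : Set ℂ) :
    volume ((Metric.closedBall O R \ Metric.ball O r) ∩ S) + volume (Metric.closedBall O r ∩ S)
      = volume (Metric.closedBall O R ∩ S) := by
  have hsub : Metric.ball O r ⊆ Metric.closedBall O R :=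
    Metric.ball_subset_closedBall.trans (Metric.closedBall_subset_closedBall hrR)
  have h1 : (Metric.closedBall O R \ Metric.ball O r) ∩ S
      = (Metric.closedBall O R ∩ S) \ Metric.ball O r := by
    ext z; simp only [Set.mem_inter_iff, Set.mem_diff]; tauto
  have h2 : (Metric.closedBall O R ∩ S) ∩ Metric.ball O r = Metric.ball O r ∩ S := by
    ext z; simp only [Set.mem_inter_iff]
    exact ⟨fun h => ⟨h.2, h.1.2⟩, fun h => ⟨⟨hsub h.1, h.2⟩, h.1⟩⟩
  have h3 : volume (Metric.ball O r ∩ S) = volume (Metric.closedBall O r ∩ S) := by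
    refine le_antisymm
      (measure_mono (Set.inter_subset_inter_left _ Metric.ball_subset_closedBall)) ?_
    calc volume (Metric.closedBall O r ∩ S)
        ≤ volume ((Metric.ball O r ∩ S) ∪ Metric.sphere O r) := by
          apply measure_mono
          intro z hz
          rcases le_or_gt (dist z O) r with h | h
          · rcases lt_or_eq_of_le h with h' | h'
            · exact Or.inl ⟨Metric.mem_ball.2 h', hz.2⟩
            · exact Or.inr (Metric.mem_sphere.2 h')
          · exact absurd (Metric.mem_closedBall.1 hz.1) (not_le.2 h)
      _ ≤ volume (Metric.ball O r ∩ S) + volume (Metric.sphere O r) := measure_union_le _ _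
      _ = volume (Metric.ball O r ∩ S) := by
          rw [Measure.addHaar_sphere volume O r, add_zero]
  rw [h1, ← h3, add_comm, ← h2]
  exact measure_inter_add_diff _ measurableSet_ball

/-- Baumkuchen Theorem: `B = D \ int(D̃)` the annulus between concentric
closed disks of radii `R > r > 0` about `O`; `P ∈ D̃`; `n ≥ 4` even.  The `n` lines
through `P` at angles `θ + jπ/n` cut `B` into `2n` pieces, `Piece(j)` being `B`
intersected with the sector at `P` of angles `[θ + (j−1)π/n, θ + jπ/n]`.  Then for each
`1 ≤ k ≤ n` the areas of `Piece(k)` and `Piece(k+n)` sum to `(1/n)·π(R² − r²)`. -/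
theorem baumkuchen_stmt6
    (O P : ℂ) (R r : ℝ) (hr : 0 < r) (hrR : r < R)
    (hP : P ∈ Metric.closedBall O r)
    (n : ℕ) (hn : 4 ≤ n) (hev : Even n) (θ : ℝ) :
    ∀ k : ℕ, 1 ≤ k → k ≤ n →
      volume ((Metric.closedBall O R \ interior (Metric.closedBall O r)) ∩
          angularSector P (θ + ((k - 1 : ℕ) : ℝ) * π / n) (θ + (k : ℝ) * π / n)) +
      volume ((Metric.closedBall O R \ interior (Metric.closedBall O r)) ∩
          angularSector P (θ + ((k + n - 1 : ℕ) : ℝ) * π / n) (θ + ((k + n : ℕ) : ℝ) * π / n)) =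
      ENNReal.ofReal (1 / n * (π * (R ^ 2 - r ^ 2))) := by
  intro k hk1 hkn
  have hn4 : (4 : ℝ) ≤ (n : ℝ) := by exact_mod_cast hn
  have hn0 : (0 : ℝ) < n := by linarith
  set w : ℝ := π / n with hw
  have hpi := Real.pi_pos
  have hw0 : 0 < w := by rw [hw]; positivity
  have hw4 : w ≤ π / 4 := by
    rw [hw, div_le_div_iff₀ hn0 (by norm_num)]
    nlinarith
  have hcast1 : ((k - 1 : ℕ) : ℝ) = (k : ℝ) - 1 := by
    rw [Nat.cast_sub hk1]; norm_num
  have hcast2 : ((k + n - 1 : ℕ) : ℝ) = (k : ℝ) + (n : ℝ) - 1 := by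
    rw [Nat.cast_sub (le_trans hk1 (Nat.le_add_right _ _))]; push_cast; ring
  set α₁ : ℝ := θ + ((k : ℝ) - 1) * π / n with hα₁
  have hne : (n : ℝ) ≠ 0 := ne_of_gt hn0
  have he1 : θ + ((k - 1 : ℕ) : ℝ) * π / n = α₁ := by rw [hcast1]
  have he2 : θ + (k : ℝ) * π / n = α₁ + w := by rw [hα₁, hw]; field_simp; ring
  have he3 : θ + ((k + n - 1 : ℕ) : ℝ) * π / n = (α₁ + π) := by
    rw [hcast2, hα₁]; field_simp; ring
  have he4 : θ + ((k + n : ℕ) : ℝ) * π / n = (α₁ + π) + w := by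
    push_cast; rw [hα₁, hw]; field_simp; ring
  rw [he1, he2, he3, he4, interior_closedBall O hr.ne']
  set c : ℂ := Complex.exp ((-((α₁ + (α₁ + w)) / 2) : ℝ) * Complex.I) * (O - P) with hc
  have habsOP : ‖O - P‖ ≤ r := by
    rw [Metric.mem_closedBall] at hP
    rw [← Complex.dist_eq, dist_comm]
    exact hP
  have habsc : ‖c‖ ≤ r := by
    rw [hc, norm_mul, Complex.norm_exp_ofReal_mul_I, one_mul]; exact habsOP
  have habscneg : ‖-c‖ ≤ r := by
    rw [norm_neg]; exact habsc
  have hhw1 : -π < -(w/2) := by linarith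
  have hhw3 : -(w/2) ≤ (w/2) := by linarith
  have hhw2 : (w/2) < π := by linarith
  -- general volume formula for a sector of width w
  have hvol : ∀ (ρ : ℝ) (α : ℝ),
      ‖Complex.exp ((-((α + (α + w)) / 2) : ℝ) * Complex.I) * (O - P)‖ ≤ ρ →
      volume (Metric.closedBall O ρ ∩ angularSector P α (α + w))
        = ENNReal.ofReal (∫ φ in (-(w/2))..(w/2),
            dFun (Complex.exp ((-((α + (α + w)) / 2) : ℝ) * Complex.I) * (O - P)) ρ φ ^ 2 / 2) := by
    intro ρ α hcρ
    rw [volume_ball_inter_sector_move O P ρ α (α + w)]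
    have h2 : ((α + w) - α) / 2 = w / 2 := by ring
    rw [h2]
    exact volume_ball_inter_sector _ ρ _ _ hcρ hhw1 hhw3 hhw2
  -- center of the opposite sector
  have hc2 : Complex.exp ((-(((α₁ + π) + ((α₁ + π) + w)) / 2) : ℝ) * Complex.I) * (O - P)
      = -c := by
    rw [hc]
    have hsplit : ((-(((α₁ + π) + ((α₁ + π) + w)) / 2) : ℝ) : ℂ) * Complex.I
        = ((-((α₁ + (α₁ + w)) / 2) : ℝ) : ℂ) * Complex.I + (-((π : ℂ) * Complex.I)) := by
      push_cast; ring
    rw [hsplit, Complex.exp_add, Complex.exp_neg, Complex.exp_pi_mul_I]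
    norm_num
  -- the four integrals
  set IR1 : ℝ := ∫ φ in (-(w/2))..(w/2), dFun c R φ ^ 2 / 2 with hIR1
  set Ir1 : ℝ := ∫ φ in (-(w/2))..(w/2), dFun c r φ ^ 2 / 2 with hIr1
  set IR2 : ℝ := ∫ φ in (-(w/2))..(w/2), dFun (-c) R φ ^ 2 / 2 with hIR2
  set Ir2 : ℝ := ∫ φ in (-(w/2))..(w/2), dFun (-c) r φ ^ 2 / 2 with hIr2
  have hvolR1 : volume (Metric.closedBall O R ∩ angularSector P α₁ (α₁ + w))
      = ENNReal.ofReal IR1 := hvol R α₁ (habsc.trans hrR.le)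
  have hvolr1 : volume (Metric.closedBall O r ∩ angularSector P α₁ (α₁ + w))
      = ENNReal.ofReal Ir1 := hvol r α₁ habsc
  have hvolR2 : volume (Metric.closedBall O R ∩ angularSector P (α₁ + π) ((α₁ + π) + w))
      = ENNReal.ofReal IR2 := by
    have := hvol R (α₁ + π) (by rw [hc2]; exact habscneg.trans hrR.le)
    rwa [hc2] at this
  have hvolr2 : volume (Metric.closedBall O r ∩ angularSector P (α₁ + π) ((α₁ + π) + w))
      = ENNReal.ofReal Ir2 := by
    have := hvol r (α₁ + π) (by rw [hc2]; exact habscneg)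
    rwa [hc2] at this
  have hann1 := volume_ball_div_sphere O r R hrR.le (angularSector P α₁ (α₁ + w))
  have hann2 := volume_ball_div_sphere O r R hrR.le (angularSector P (α₁ + π) ((α₁ + π) + w))
  rw [hvolR1, hvolr1] at hann1
  rw [hvolR2, hvolr2] at hann2
  -- nonnegativity
  have hnn : ∀ (c' : ℂ) (ρ : ℝ), 0 ≤ ∫ φ in (-(w/2))..(w/2), dFun c' ρ φ ^ 2 / 2 :=
    fun c' ρ => intervalIntegral.integral_nonneg hhw3 (fun φ _ => by positivity)
  have htgt0 : 0 ≤ 1 / (n : ℝ) * (π * (R ^ 2 - r ^ 2)) := by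
    have : 0 ≤ R ^ 2 - r ^ 2 := by nlinarith
    positivity
  -- the key real identity
  have hcont : ∀ (c' : ℂ) (ρ : ℝ),
      IntervalIntegrable (fun φ => dFun c' ρ φ ^ 2 / 2) volume (-(w/2)) (w/2) :=
    fun c' ρ => (((continuous_dFun c' ρ).pow 2).div_const 2).intervalIntegrable _ _
  have hreal : IR1 + IR2 = 1 / (n : ℝ) * (π * (R ^ 2 - r ^ 2)) + (Ir1 + Ir2) := by
    rw [hIR1, hIR2, hIr1, hIr2,
      ← intervalIntegral.integral_add (hcont c R) (hcont (-c) R),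
      ← intervalIntegral.integral_add (hcont c r) (hcont (-c) r)]
    have hfun : (fun φ => dFun c R φ ^ 2 / 2 + dFun (-c) R φ ^ 2 / 2)
        = fun φ => (dFun c r φ ^ 2 / 2 + dFun (-c) r φ ^ 2 / 2) + (R ^ 2 - r ^ 2) := by
      funext φ
      rw [dFun_sq_pair c (habsc.trans hrR.le) φ, dFun_sq_pair c habsc φ]
      ring
    rw [hfun, intervalIntegral.integral_add ((hcont c r).add (hcont (-c) r))
      intervalIntegrable_const, intervalIntegral.integral_const, smul_eq_mul]
    rw [hw]
    field_simp
    ring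
  -- assemble in ENNReal
  have hsum : (volume ((Metric.closedBall O R \ Metric.ball O r) ∩ angularSector P α₁ (α₁ + w))
        + volume ((Metric.closedBall O R \ Metric.ball O r) ∩
            angularSector P (α₁ + π) ((α₁ + π) + w)))
      + (ENNReal.ofReal Ir1 + ENNReal.ofReal Ir2)
      = ENNReal.ofReal (1 / (n : ℝ) * (π * (R ^ 2 - r ^ 2)))
        + (ENNReal.ofReal Ir1 + ENNReal.ofReal Ir2) := by
    calc _ = (volume ((Metric.closedBall O R \ Metric.ball O r) ∩ angularSector P α₁ (α₁ + w))
            + ENNReal.ofReal Ir1)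
          + (volume ((Metric.closedBall O R \ Metric.ball O r) ∩
              angularSector P (α₁ + π) ((α₁ + π) + w)) + ENNReal.ofReal Ir2) := by ring
      _ = ENNReal.ofReal IR1 + ENNReal.ofReal IR2 := by rw [hann1, hann2]
      _ = ENNReal.ofReal (IR1 + IR2) := (ENNReal.ofReal_add (hnn c R) (hnn (-c) R)).symm
      _ = ENNReal.ofReal (1 / (n : ℝ) * (π * (R ^ 2 - r ^ 2)) + (Ir1 + Ir2)) := by rw [hreal]
      _ = _ := by
          rw [ENNReal.ofReal_add htgt0 (add_nonneg (hnn c r) (hnn (-c) r)),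
            ENNReal.ofReal_add (hnn c r) (hnn (-c) r)]
  exact (ENNReal.add_left_inj (by simp)).1 hsum
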